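/- Let n ≥ 2 and q ≥ 2. Any edge clique cover of the Hamming graph H(n,q) of minimum size n·q^{n−1} consists of pairwise edge-disjoint cliques, each of which is a maximum clique (of size q). -/

import Mathlib

open SimpleGraph

/-- The Hamming graph H(n,q): vertices are `Fin n → Fin q`, adjacent iff Hamming distance 1. -/
def hammingGraph (n q : ℕ) : SimpleGraph (Fin n → Fin q) where
  Adj x y := hammingDist x y = 1
  symm := ⟨by intro x y h; exact (hammingDist_comm y x).trans h⟩
  loopless := ⟨by intro x h; simp [hammingDist_self] at h⟩

/-- The competition graph of a digraph `D`. -/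
def competitionGraph {V : Type*} (D : V → V → Prop) : SimpleGraph V where
  Adj u v := u ≠ v ∧ ∃ x, D u x ∧ D v x
  symm := ⟨by rintro u v ⟨h, x, hu, hv⟩; exact ⟨h.symm, x, hv, hu⟩⟩
  loopless := ⟨by rintro u ⟨h, _⟩; exact h rfl⟩

/-- A digraph is acyclic iff it has no directed cycle. -/
def IsAcyclicDigraph {V : Type*} (D : V → V → Prop) : Prop :=
  ∀ v, ¬ Relation.TransGen D v v

/-- `G` together with `k` isolated vertices. -/
def addIsolated {V : Type*} (G : SimpleGraph V) (k : ℕ) : SimpleGraph (V ⊕ Fin k) where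
  Adj x y := ∃ u v, x = Sum.inl u ∧ y = Sum.inl v ∧ G.Adj u v
  symm := ⟨by rintro x y ⟨u, v, rfl, rfl, h⟩; exact ⟨v, u, rfl, rfl, h.symm⟩⟩
  loopless := ⟨by rintro x ⟨u, v, rfl, h, hadj⟩; injection h with h; subst h; exact hadj.ne rfl⟩

/-- The competition number of a graph. -/
noncomputable def competitionNumber {V : Type*} (G : SimpleGraph V) : ℕ :=
  sInf {k | ∃ D : (V ⊕ Fin k) → (V ⊕ Fin k) → Prop,
    IsAcyclicDigraph D ∧ competitionGraph D = addIsolated G k}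

/-- The maximal clique `S_j(p)` of `H(n,q)`: all tuples agreeing with `p` off coordinate `j`. -/
def Sset {n q : ℕ} (j : Fin n) (p : Fin n → Fin q) : Set (Fin n → Fin q) :=
  {x | ∀ i, i ≠ j → x i = p i}

/-- A maximal clique of a graph. -/
def IsMaxClique {V : Type*} (G : SimpleGraph V) (S : Set V) : Prop :=
  G.IsClique S ∧ ∀ T, G.IsClique T → S ⊆ T → S = T

/-- An edge clique cover. -/
def IsEdgeCliqueCover {V : Type*} (G : SimpleGraph V) (F : Finset (Finset V)) : Prop :=
  (∀ S ∈ F, G.IsClique (S : Set V)) ∧ ∀ u v, G.Adj u v → ∃ S ∈ F, u ∈ S ∧ v ∈ S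

/-- In-neighborhood of a vertex in a digraph. -/
def inNbhd {V : Type*} (D : V → V → Prop) (v : V) : Set V := {w | D w v}

section Aux
variable {n q : ℕ}

lemma hamming_adj_iff {x y : Fin n → Fin q} :
    (hammingGraph n q).Adj x y ↔ ∃ j, x j ≠ y j ∧ ∀ i, i ≠ j → x i = y i := by
  show hammingDist x y = 1 ↔ _
  rw [hammingDist, Finset.card_eq_one]
  constructor
  · rintro ⟨j, hj⟩
    refine ⟨j, ?_, ?_⟩
    · have : j ∈ Finset.univ.filter fun i => x i ≠ y i := by rw [hj]; simp
      simpa using this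
    · intro i hi
      by_contra h
      have : i ∈ Finset.univ.filter fun i => x i ≠ y i := by simp [h]
      rw [hj] at this; simp at this; exact hi this
  · rintro ⟨j, hj, hoff⟩
    refine ⟨j, ?_⟩
    ext i
    simp only [Finset.mem_filter, Finset.mem_univ, true_and, Finset.mem_singleton]
    constructor
    · intro h; by_contra hi; exact h (hoff i hi)
    · rintro rfl; exact hj

lemma clique_subset_line {S : Set (Fin n → Fin q)} (hS : (hammingGraph n q).IsClique S)
    {u v : Fin n → Fin q} (hu : u ∈ S) (hv : v ∈ S) {j : Fin n}
    (hj : u j ≠ v j) (hoff : ∀ i, i ≠ j → u i = v i) :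
    ∀ w ∈ S, ∀ i, i ≠ j → w i = u i := by
  intro w hw i hi
  by_cases hwu : w = u
  · rw [hwu]
  by_cases hwv : w = v
  · rw [hwv]; exact (hoff i hi).symm
  obtain ⟨a, ha, haoff⟩ := hamming_adj_iff.mp (hS hw hu hwu)
  obtain ⟨b, hb, hboff⟩ := hamming_adj_iff.mp (hS hw hv hwv)
  have haj : a = j := by
    by_contra haj
    have h1 : w a ≠ v a := by rw [← hoff a haj]; exact ha
    have hba : a = b := by
      by_contra hba
      exact h1 (hboff a hba)
    have e1 : w j = u j := haoff j (fun e => haj e.symm)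
    have e2 : w j = v j := hboff j (fun e => haj (hba ▸ e).symm)
    exact hj (by rw [← e1, e2])
  subst haj
  exact haoff i hi

def lineEquiv (j : Fin n) (c : Fin q) :
    {p : Fin n → Fin q // p j = c} ≃ ({i : Fin n // i ≠ j} → Fin q) where
  toFun p i := p.1 i
  invFun g := ⟨fun i => if h : i = j then c else g ⟨i, h⟩, by simp⟩
  left_inv p := by
    ext i
    by_cases h : i = j
    · subst h; simp [p.2]
    · simp [h]
  right_inv g := by
    ext i
    simp [i.2]

lemma card_line (j : Fin n) (c : Fin q) :
    Fintype.card {p : Fin n → Fin q // p j = c} = q ^ (n - 1) := by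
  rw [Fintype.card_congr (lineEquiv j c), Fintype.card_fun]
  simp [Fintype.card_subtype_compl]

def LineP [NeZero q] (S : Finset (Fin n → Fin q)) (j : Fin n) (p : Fin n → Fin q) : Prop :=
  (∃ u ∈ S, ∃ v ∈ S, u ≠ v) ∧ p j = 0 ∧ ∀ w ∈ S, ∀ i, i ≠ j → w i = p i

lemma lineP_unique [NeZero q] {S : Finset (Fin n → Fin q)}
    (hS : (hammingGraph n q).IsClique (S : Set (Fin n → Fin q)))
    {j j' : Fin n} {p p' : Fin n → Fin q}
    (h : LineP S j p) (h' : LineP S j' p') : j = j' ∧ p = p' := by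
  obtain ⟨⟨u, hu, v, hv, huv⟩, hp0, hoff⟩ := h
  obtain ⟨_, hp0', hoff'⟩ := h'
  obtain ⟨a, ha, haoff⟩ := hamming_adj_iff.mp (hS hu hv huv)
  have haj : a = j := by
    by_contra haj
    exact ha ((hoff u hu a haj).trans (hoff v hv a haj).symm)
  have haj' : a = j' := by
    by_contra hajx
    exact ha ((hoff' u hu a hajx).trans (hoff' v hv a hajx).symm)
  have hjj : j = j' := haj ▸ haj'
  refine ⟨hjj, funext fun i => ?_⟩
  by_cases hij : i = j
  · subst hij; rw [hp0, hjj]; exact hp0'.symm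
  · rw [← hoff u hu i hij, hoff' u hu i (fun e => hij (e.trans hjj.symm))]

end Aux

section Aux2
variable {n q : ℕ}

lemma sigma_subtype_ext [NeZero q] {x y : Σ j : Fin n, {p : Fin n → Fin q // p j = 0}}
    (h1 : x.1 = y.1) (h2 : x.2.1 = y.2.1) : x = y := by
  obtain ⟨j, p, hp⟩ := x; obtain ⟨j', p', hp'⟩ := y
  dsimp at h1 h2
  subst h1
  have he : (⟨p, hp⟩ : {p : Fin n → Fin q // p j = 0}) = ⟨p', hp'⟩ := Subtype.ext h2
  cases he
  rfl

end Aux2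

theorem minimum_edge_clique_cover_structure (n q : ℕ) (hn : 2 ≤ n) (hq : 2 ≤ q)
    (F : Finset (Finset (Fin n → Fin q)))
    (hF : IsEdgeCliqueCover (hammingGraph n q) F) (hcard : F.card = n * q ^ (n - 1)) :
    (∀ S ∈ F, S.card = q) ∧
      ∀ S ∈ F, ∀ T ∈ F, S ≠ T → (S ∩ T).card ≤ 1 := by
  classical
  haveI : NeZero q := ⟨by omega⟩
  obtain ⟨hclq, hcov⟩ := hF
  have hcardq : 1 < Fintype.card (Fin q) := by rw [Fintype.card_fin]; omega
  -- For each line index (j, p with p j = 0), some clique of F contains two of its points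
  -- and hence is contained in that line.
  have key : ∀ (j : Fin n) (p : {p : Fin n → Fin q // p j = 0}), ∃ S ∈ F, LineP S j p.1 := by
    rintro j ⟨p, hp⟩
    obtain ⟨c, hc⟩ := Fintype.exists_ne_of_one_lt_card hcardq (p j)
    set v := Function.update p j c with hv
    have hvj : v j = c := Function.update_self j c p
    have hpj : p j ≠ v j := by rw [hvj]; exact fun e => hc e.symm
    have hoffv : ∀ i, i ≠ j → p i = v i := fun i hi => (Function.update_of_ne hi c p).symm
    obtain ⟨S, hSF, hpS, hvS⟩ := hcov p v (hamming_adj_iff.mpr ⟨j, hpj, hoffv⟩)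
    refine ⟨S, hSF, ⟨p, hpS, v, hvS, fun e => hpj (congrFun e j)⟩, hp, ?_⟩
    intro w hw i hi
    exact clique_subset_line (hclq S hSF) hpS hvS hpj hoffv w hw i hi
  choose χ hχF hχP using key
  set χ' : (Σ j : Fin n, {p : Fin n → Fin q // p j = 0}) → {S // S ∈ F} :=
    fun x => ⟨χ x.1 x.2, hχF x.1 x.2⟩ with hχ'
  have hinj : Function.Injective χ' := by
    intro x y h
    have hSe : χ x.1 x.2 = χ y.1 y.2 := congrArg Subtype.val h
    have h1 := hχP x.1 x.2
    rw [hSe] at h1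
    have h2 := hχP y.1 y.2
    obtain ⟨hj, hpp⟩ := lineP_unique (hclq _ (hχF y.1 y.2)) h1 h2
    exact sigma_subtype_ext hj hpp
  have hcardI : Fintype.card (Σ j : Fin n, {p : Fin n → Fin q // p j = 0})
      = n * q ^ (n - 1) := by
    rw [Fintype.card_sigma]
    simp only [card_line, Finset.sum_const, smul_eq_mul, Finset.card_univ, Fintype.card_fin]
  have hsurj : Function.Surjective χ' := by
    have hb := (Fintype.bijective_iff_injective_and_card χ').mpr
      ⟨hinj, by rw [hcardI, Fintype.card_coe, hcard]⟩
    exact hb.2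
  have hline : ∀ S ∈ F, ∃ j p, LineP S j p := by
    intro S hS
    obtain ⟨x, hx⟩ := hsurj ⟨S, hS⟩
    have hSe : χ x.1 x.2 = S := congrArg Subtype.val hx
    exact ⟨x.1, x.2.1, hSe ▸ hχP x.1 x.2⟩
  have huniq : ∀ S ∈ F, ∀ T ∈ F, ∀ j p, LineP S j p → LineP T j p → S = T := by
    intro S hS T hT j p h1 h2
    obtain ⟨xS, hxS⟩ := hsurj ⟨S, hS⟩
    obtain ⟨xT, hxT⟩ := hsurj ⟨T, hT⟩
    have eS : χ xS.1 xS.2 = S := congrArg Subtype.val hxS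
    have eT : χ xT.1 xT.2 = T := congrArg Subtype.val hxT
    have pS := hχP xS.1 xS.2; rw [eS] at pS
    have pT := hχP xT.1 xT.2; rw [eT] at pT
    obtain ⟨e1, e2⟩ := lineP_unique (hclq S hS) pS h1
    obtain ⟨e3, e4⟩ := lineP_unique (hclq T hT) pT h2
    have hxx : xS = xT := sigma_subtype_ext (e1.trans e3.symm) (e2.trans e4.symm)
    rw [← eS, ← eT, hxx]
  have hq' : ∀ S ∈ F, S.card = q := by
    intro S hS
    obtain ⟨j, p, hP⟩ := hline S hS
    have hSeq : S = Finset.univ.filter (fun x => ∀ i, i ≠ j → x i = p i) := by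
      apply Finset.ext
      intro x
      simp only [Finset.mem_filter, Finset.mem_univ, true_and]
      constructor
      · exact fun hx => hP.2.2 x hx
      · intro hx
        obtain ⟨c, hc⟩ := Fintype.exists_ne_of_one_lt_card hcardq (x j)
        set y := Function.update x j c with hy
        have hyj : x j ≠ y j := by
          rw [hy, Function.update_self]; exact fun e => hc e.symm
        have hoffy : ∀ i, i ≠ j → x i = y i := fun i hi => (Function.update_of_ne hi c x).symm
        obtain ⟨T, hTF, hxT, hyT⟩ := hcov x y (hamming_adj_iff.mpr ⟨j, hyj, hoffy⟩)
        have hPT : LineP T j p := by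
          refine ⟨⟨x, hxT, y, hyT, fun e => hyj (congrFun e j)⟩, hP.2.1, ?_⟩
          intro w hw i hi
          rw [clique_subset_line (hclq T hTF) hxT hyT hyj hoffy w hw i hi]
          exact hx i hi
        rw [huniq S hS T hTF j p hP hPT]
        exact hxT
    rw [hSeq]
    have himg : Finset.univ.filter (fun x : Fin n → Fin q => ∀ i, i ≠ j → x i = p i)
        = Finset.image (fun c => Function.update p j c) Finset.univ := by
      apply Finset.ext
      intro x
      simp only [Finset.mem_filter, Finset.mem_univ, true_and, Finset.mem_image]
      constructor
      · intro hx
        refine ⟨x j, funext fun i => ?_⟩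
        by_cases hij : i = j
        · subst hij; rw [Function.update_self]
        · rw [Function.update_of_ne hij]; exact (hx i hij).symm
      · rintro ⟨c, rfl⟩ i hi
        exact Function.update_of_ne hi c p
    rw [himg, Finset.card_image_of_injective _ (fun a b hab => by
      have h := congrFun hab j
      rwa [Function.update_self, Function.update_self] at h)]
    simp
  refine ⟨hq', ?_⟩
  intro S hS T hT hST
  by_contra hcard2
  push_neg at hcard2
  obtain ⟨u, hu, v, hv, huv⟩ := Finset.one_lt_card.mp hcard2
  simp only [Finset.mem_inter] at hu hv
  obtain ⟨j, p, hPS⟩ := hline S hS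
  obtain ⟨j', p', hPT⟩ := hline T hT
  obtain ⟨a, ha, haoff⟩ := hamming_adj_iff.mp (hclq S hS hu.1 hv.1 huv)
  have haj : a = j := by
    by_contra h
    exact ha ((hPS.2.2 u hu.1 a h).trans (hPS.2.2 v hv.1 a h).symm)
  have haj' : a = j' := by
    by_contra h
    exact ha ((hPT.2.2 u hu.2 a h).trans (hPT.2.2 v hv.2 a h).symm)
  have hjj : j = j' := haj ▸ haj'
  have hpp : p = p' := funext fun i => by
    by_cases hij : i = j
    · subst hij; rw [hPS.2.1, hjj]; exact hPT.2.1.symm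
    · rw [← hPS.2.2 u hu.1 i hij, hPT.2.2 u hu.2 i (fun e => hij (e.trans hjj.symm))]
  exact hST (huniq S hS T hT j p hPS (by rw [hjj, hpp]; exact hPT))
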